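/- For all real numbers r, s, φ with 0 ≤ s < r, one has log(r² − 2 r s cos φ + s²) = 2 log r − 2 ∑_{n=1}^∞ (sⁿ / (n rⁿ)) cos(n φ), where the series on the right converges. -/

import Mathlib

open Real

theorem stmt10 (r s φ : ℝ) (hs : 0 ≤ s) (hsr : s < r) :
    ∃ S : ℝ,
      HasSum (fun n : ℕ =>
        s ^ (n + 1) / ((n + 1) * r ^ (n + 1)) * Real.cos ((n + 1) * φ)) S ∧
      Real.log (r ^ 2 - 2 * r * s * Real.cos φ + s ^ 2) = 2 * Real.log r - 2 * S := by
  have hr : 0 < r := lt_of_le_of_lt hs hsr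
  set z : ℂ := (↑(s / r) : ℂ) * Complex.exp (↑φ * Complex.I) with hzdef
  have hnz : ‖z‖ = s / r := by
    simp [hzdef, Complex.norm_exp_ofReal_mul_I, abs_of_nonneg hs, abs_of_pos hr,
      abs_of_nonneg (div_nonneg hs hr.le)]
  have hz1 : ‖z‖ < 1 := by rw [hnz]; exact (div_lt_one hr).2 hsr
  have h := Complex.hasSum_taylorSeries_neg_log hz1
  have hre := h.mapL Complex.reCLM
  have hterm : ∀ n : ℕ, Complex.reCLM (z ^ n / (n : ℂ)) = (s / r) ^ n / n * Real.cos (n * φ) := by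
    intro n
    have : z ^ n / (n : ℂ) = (↑((s / r) ^ n / n) : ℂ) * Complex.exp (↑((n : ℝ) * φ) * Complex.I) := by
      rw [hzdef, mul_pow, ← Complex.exp_nat_mul]
      push_cast
      ring
    rw [this]
    simp only [Complex.reCLM_apply, Complex.re_ofReal_mul, Complex.exp_ofReal_mul_I_re]
  simp only [hterm] at hre
  have hre1 := (hasSum_nat_add_iff' 1).mpr hre
  simp only [Finset.range_one, Finset.sum_singleton, Nat.cast_zero, pow_zero, div_zero,
    zero_mul, sub_zero] at hre1
  set T : ℝ := Complex.reCLM (-Complex.log (1 - z)) with hT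
  refine ⟨T, ?_, ?_⟩
  · have hfun : (fun n : ℕ => s ^ (n + 1) / ((n + 1 : ℝ) * r ^ (n + 1)) * Real.cos ((n + 1 : ℝ) * φ))
        = fun n : ℕ => (s / r) ^ (n + 1) / ((n + 1 : ℕ) : ℝ) * Real.cos (((n + 1 : ℕ) : ℝ) * φ) := by
      funext n
      have hrn : (0:ℝ) < r ^ (n + 1) := pow_pos hr _
      push_cast
      rw [div_pow, div_div]
      ring_nf
    rw [hfun]
    exact hre1
  · have hne : (1 : ℂ) - z ≠ 0 := by
      intro hcon
      rw [sub_eq_zero] at hcon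
      rw [← hcon] at hz1
      simp at hz1
    have hTeq : T = -Real.log ‖1 - z‖ := by
      rw [hT]; simp [Complex.log_re]
    have habs : Complex.normSq (1 - z) = 1 - 2 * (s / r) * Real.cos φ + (s / r) ^ 2 := by
      have h1 : (1 - z).re = 1 - (s / r) * Real.cos φ := by
        simp [hzdef, Complex.exp_ofReal_mul_I_re]
      have h2 : (1 - z).im = -((s / r) * Real.sin φ) := by
        simp [hzdef, Complex.exp_ofReal_mul_I_im]
      rw [Complex.normSq_apply, h1, h2]
      have := Real.sin_sq_add_cos_sq φ
      linear_combination ((s / r) ^ 2) * this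
    have hQ : r ^ 2 - 2 * r * s * Real.cos φ + s ^ 2 = r ^ 2 * Complex.normSq (1 - z) := by
      rw [habs]
      field_simp
    have habs_pos : 0 < ‖1 - z‖ := by
      simpa [norm_pos_iff] using hne
    rw [hQ, ← Complex.sq_norm, Real.log_mul (by positivity) (by positivity),
      Real.log_pow, Real.log_pow, hTeq]
    push_cast
    ring
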